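/- Let T ≥ 3, λ > 0, G > 0, let each f_t : ℝ^d → ℝ be λ-strongly convex and differentiable with ‖∇f_t(w)‖ ≤ G for all w ∈ 𝒟, let w_1 ∈ 𝒟, let the switching budget S satisfy 0 < S ≤ (2G/λ)·log(T + 1), set c = T/(exp(λS/(2G)) − 1) − 1 (so c ≥ 0), and define iterates by w_{t+1} = Π(w_t − η_t·∇f_t(w_t)) with step sizes η_t = 1/(λ(t + c)). Then the continuous switching constraint Σ_{t=2}^T ‖w_t − w_{t−1}‖ ≤ S holds, and the regret satisfies R = Σ_{t=1}^T f_t(w_t) − min_{w ∈ 𝒟} Σ_{t=1}^T f_t(w) ≤ λ·T·D²/(exp(λS/(2G)) − 1) + G·S. -/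

import Mathlib

open scoped InnerProductSpace BigOperators

/-- Euclidean projection onto the ball `{w : ‖w‖ ≤ D/2}` in `ℝ^d`. -/
noncomputable def ballProj (d : ℕ) (D : ℝ) (p : EuclideanSpace ℝ (Fin d)) :
    EuclideanSpace ℝ (Fin d) :=
  if ‖p‖ ≤ D / 2 then p else (D / (2 * ‖p‖)) • p

lemma ballProj_norm_le (d : ℕ) {D : ℝ} (hD : 0 ≤ D) (p : EuclideanSpace ℝ (Fin d)) :
    ‖ballProj d D p‖ ≤ D / 2 := by
  unfold ballProj
  split_ifs with h
  · exact h
  · push_neg at h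
    have hp : 0 < ‖p‖ := lt_of_le_of_lt (by positivity) h
    rw [norm_smul, Real.norm_eq_abs, abs_of_nonneg (by positivity)]
    have : D / (2 * ‖p‖) * ‖p‖ = D / 2 := by field_simp
    rw [this]

lemma ballProj_nonexpansive (d : ℕ) {D : ℝ} (p u : EuclideanSpace ℝ (Fin d))
    (hu : ‖u‖ ≤ D / 2) : ‖ballProj d D p - u‖ ≤ ‖p - u‖ := by
  unfold ballProj
  split_ifs with h
  · exact le_refl _
  · push_neg at h
    have hp : 0 < ‖p‖ := lt_of_le_of_lt (le_trans (norm_nonneg u) hu) h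
    set t := D / (2 * ‖p‖) with ht
    have ht0 : 0 ≤ t := by
      have hD0 : 0 ≤ D := by linarith [norm_nonneg u]
      positivity
    have htp : t * ‖p‖ = D / 2 := by rw [ht]; field_simp
    have ht1 : t < 1 := by nlinarith
    have hcs : ⟪p, u⟫_ℝ ≤ ‖p‖ * ‖u‖ := real_inner_le_norm p u
    have h5 : 0 ≤ (1 + t) * ‖p‖ - 2 * ‖u‖ := by nlinarith
    have hsq : ‖t • p - u‖ ^ 2 ≤ ‖p - u‖ ^ 2 := by
      rw [norm_sub_sq_real, norm_sub_sq_real, real_inner_smul_left, norm_smul,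
        Real.norm_eq_abs, abs_of_nonneg ht0, mul_pow]
      nlinarith [mul_nonneg (mul_nonneg (sub_nonneg.2 ht1.le) hp.le) h5,
        mul_nonneg (sub_nonneg.2 ht1.le) (sub_nonneg.2 hcs)]
    nlinarith [norm_nonneg (t • p - u), norm_nonneg (p - u), hsq]

lemma log_harm {x : ℝ} (hx : 1 ≤ x) : x⁻¹ ≤ 2 * (Real.log (x + 1) - Real.log x) := by
  have hx0 : 0 < x := lt_of_lt_of_le one_pos hx
  have hx1 : 0 < x + 1 := by linarith
  have h1 := Real.log_le_sub_one_of_pos (show 0 < x / (x + 1) by positivity)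
  rw [Real.log_div hx0.ne' hx1.ne'] at h1
  have h2 : x / (x + 1) - 1 = -(1 / (x + 1)) := by field_simp; ring
  rw [h2] at h1
  have h3 : x⁻¹ ≤ 2 * (1 / (x + 1)) := by
    have he : 2 * (1 / (x + 1)) = 2 / (x + 1) := by ring
    rw [he, inv_eq_one_div, div_le_div_iff₀ hx0 hx1]
    linarith
  linarith

lemma harmSum (c : ℝ) (hc : 0 ≤ c) (N : ℕ) :
    ∑ t ∈ Finset.Icc 1 N, ((t : ℝ) + c)⁻¹ ≤
      2 * (Real.log ((N : ℝ) + 1 + c) - Real.log (1 + c)) := by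
  have key : ∀ i ∈ Finset.range N, (((1 + i : ℕ) : ℝ) + c)⁻¹ ≤
      2 * (Real.log (((i + 1 : ℕ) : ℝ) + 1 + c) - Real.log (((i : ℕ) : ℝ) + 1 + c)) := by
    intro i _
    have hi : (0 : ℝ) ≤ (i : ℝ) := Nat.cast_nonneg i
    have h1 : (1 : ℝ) ≤ (i : ℝ) + 1 + c := by linarith
    have hl := log_harm h1
    have e1 : ((1 + i : ℕ) : ℝ) + c = (i : ℝ) + 1 + c := by push_cast; ring
    have e2 : ((i + 1 : ℕ) : ℝ) + 1 + c = ((i : ℝ) + 1 + c) + 1 := by push_cast; ring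
    rw [e1, e2]
    push_cast
    linarith
  rw [← Finset.Ico_add_one_right_eq_Icc, Finset.sum_Ico_eq_sum_range]
  simp only [Nat.add_sub_cancel]
  calc ∑ i ∈ Finset.range N, (((1 + i : ℕ) : ℝ) + c)⁻¹
      ≤ ∑ i ∈ Finset.range N,
          2 * (Real.log (((i + 1 : ℕ) : ℝ) + 1 + c) - Real.log (((i : ℕ) : ℝ) + 1 + c)) :=
        Finset.sum_le_sum key
    _ = 2 * (Real.log ((N : ℝ) + 1 + c) - Real.log (1 + c)) := by
        rw [← Finset.mul_sum, Finset.sum_range_sub (fun i => Real.log (((i : ℕ) : ℝ) + 1 + c))]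
        norm_num

/-- For `λ`-strongly convex differentiable losses with gradients bounded by `G`
on the ball `𝒟`, if `0 < S ≤ (2G/λ)·log (T + 1)` and `c = T/(exp (λS/(2G)) − 1) − 1`, then OGD
with step sizes `η_t = 1/(λ(t + c))` satisfies the continuous switching constraint and has regret
at most `λ·T·D²/(exp (λS/(2G)) − 1) + G·S`. -/
theorem stmt17 (d T : ℕ) (hT : 3 ≤ T) (D G lam S c : ℝ) (hD : 0 < D) (hlam : 0 < lam)
    (hG : 0 < G) (hS0 : 0 < S) (hS : S ≤ (2 * G / lam) * Real.log ((T : ℝ) + 1))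
    (hcdef : c = (T : ℝ) / (Real.exp (lam * S / (2 * G)) - 1) - 1)
    (f : ℕ → EuclideanSpace ℝ (Fin d) → ℝ)
    (hdiff : ∀ t ∈ Finset.Icc 1 T, Differentiable ℝ (f t))
    (hsc : ∀ t ∈ Finset.Icc 1 T,
      ∀ u ∈ Metric.closedBall (0 : EuclideanSpace ℝ (Fin d)) (D / 2),
      ∀ v ∈ Metric.closedBall (0 : EuclideanSpace ℝ (Fin d)) (D / 2),
        f t v + ⟪gradient (f t) v, u - v⟫_ℝ + lam / 2 * ‖u - v‖ ^ 2 ≤ f t u)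
    (hgrad : ∀ t ∈ Finset.Icc 1 T,
      ∀ v ∈ Metric.closedBall (0 : EuclideanSpace ℝ (Fin d)) (D / 2), ‖gradient (f t) v‖ ≤ G)
    (w : ℕ → EuclideanSpace ℝ (Fin d))
    (hw1 : w 1 ∈ Metric.closedBall (0 : EuclideanSpace ℝ (Fin d)) (D / 2))
    (hupd : ∀ t ∈ Finset.Icc 1 (T - 1),
      w (t + 1) = ballProj d D (w t - (1 / (lam * ((t : ℝ) + c))) • gradient (f t) (w t))) :
    (∑ t ∈ Finset.Icc 2 T, ‖w t - w (t - 1)‖ ≤ S) ∧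
    (∑ t ∈ Finset.Icc 1 T, f t (w t)) -
        (⨅ v : Metric.closedBall (0 : EuclideanSpace ℝ (Fin d)) (D / 2),
          ∑ t ∈ Finset.Icc 1 T, f t (v : EuclideanSpace ℝ (Fin d))) ≤
      lam * (T : ℝ) * D ^ 2 / (Real.exp (lam * S / (2 * G)) - 1) + G * S := by
  have hT1 : (1 : ℝ) ≤ (T : ℝ) := by exact_mod_cast le_trans (by norm_num) hT
  have hTpos : (0 : ℝ) < T := by linarith
  set a := lam * S / (2 * G) with hadef
  have ha : 0 < a := by positivity
  have hE : 0 < Real.exp a - 1 := by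
    have h1 : Real.exp 0 < Real.exp a := Real.exp_lt_exp.mpr ha
    rw [Real.exp_zero] at h1; linarith
  have haL : a ≤ Real.log ((T : ℝ) + 1) := by
    have h := mul_le_mul_of_nonneg_left hS hlam.le
    have he : lam * (2 * G / lam * Real.log ((T : ℝ) + 1)) = 2 * G * Real.log ((T : ℝ) + 1) := by
      field_simp
    rw [he] at h
    rw [hadef, div_le_iff₀ (by positivity)]
    linarith
  have hET : Real.exp a - 1 ≤ (T : ℝ) := by
    have h1 : Real.exp a ≤ (T : ℝ) + 1 := by
      calc Real.exp a ≤ Real.exp (Real.log ((T : ℝ) + 1)) := Real.exp_le_exp.mpr haL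
        _ = (T : ℝ) + 1 := Real.exp_log (by positivity)
    linarith
  have hc1 : c + 1 = (T : ℝ) / (Real.exp a - 1) := by rw [hcdef]; ring
  have hc0 : 0 ≤ c := by
    have h1 : 1 ≤ (T : ℝ) / (Real.exp a - 1) := (one_le_div hE).mpr hET
    linarith
  have hkeylog : Real.log ((T : ℝ) + 1 + c) - Real.log (1 + c) = a := by
    have h1c : (0 : ℝ) < 1 + c := by linarith
    have hTe : (1 + c) * (Real.exp a - 1) = (T : ℝ) := by
      rw [show (1 : ℝ) + c = c + 1 from by ring, hc1]
      field_simp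
    have hTc : (T : ℝ) + 1 + c = (1 + c) * Real.exp a := by linarith [hTe]
    rw [hTc, Real.log_mul h1c.ne' (Real.exp_pos a).ne', Real.log_exp]; ring
  -- all iterates stay in the ball
  have hwball : ∀ t, 1 ≤ t → t ≤ T → ‖w t‖ ≤ D / 2 := by
    intro t ht1
    induction t, ht1 using Nat.le_induction with
    | base => intro _; exact mem_closedBall_zero_iff.mp hw1
    | succ n hn ih =>
      intro h
      rw [hupd n (by simp only [Finset.mem_Icc]; omega)]
      exact ballProj_norm_le d hD.le _
  -- one-step movement bound
  have hstep : ∀ s, 1 ≤ s → s + 1 ≤ T →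
      ‖w (s + 1) - w s‖ ≤ G / lam * ((s : ℝ) + c)⁻¹ := by
    intro s h1 h2
    have hsR : (1 : ℝ) ≤ (s : ℝ) := by exact_mod_cast h1
    have hs0 : (0 : ℝ) < (s : ℝ) + c := by linarith
    have hws : ‖w s‖ ≤ D / 2 := hwball s h1 (by omega)
    rw [hupd s (by simp only [Finset.mem_Icc]; omega)]
    calc ‖ballProj d D (w s - (1 / (lam * ((s : ℝ) + c))) • gradient (f s) (w s)) - w s‖
        ≤ ‖(w s - (1 / (lam * ((s : ℝ) + c))) • gradient (f s) (w s)) - w s‖ :=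
          ballProj_nonexpansive d _ _ hws
      _ = (1 / (lam * ((s : ℝ) + c))) * ‖gradient (f s) (w s)‖ := by
          rw [sub_sub_cancel_left, norm_neg, norm_smul, Real.norm_eq_abs,
            abs_of_nonneg (by positivity)]
      _ ≤ (1 / (lam * ((s : ℝ) + c))) * G := by
          apply mul_le_mul_of_nonneg_left _ (by positivity)
          exact hgrad s (by simp only [Finset.mem_Icc]; omega) (w s)
            (mem_closedBall_zero_iff.mpr hws)
      _ = G / lam * ((s : ℝ) + c)⁻¹ := by
          rw [one_div, mul_inv]; ring
  -- switching cost bound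
  have hswitch : ∑ t ∈ Finset.Icc 2 T, ‖w t - w (t - 1)‖ ≤ S := by
    have h1 : ∑ t ∈ Finset.Icc 2 T, ‖w t - w (t - 1)‖ ≤
        ∑ t ∈ Finset.Icc 2 T, G / lam * (((t : ℝ) - 1) + c)⁻¹ := by
      apply Finset.sum_le_sum
      intro t ht
      simp only [Finset.mem_Icc] at ht
      obtain ⟨h2, h3⟩ := ht
      have he : t - 1 + 1 = t := by omega
      have hcast : ((t - 1 : ℕ) : ℝ) = (t : ℝ) - 1 := by
        rw [Nat.cast_sub (by omega)]; norm_num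
      calc ‖w t - w (t - 1)‖ = ‖w ((t - 1) + 1) - w (t - 1)‖ := by rw [he]
        _ ≤ G / lam * (((t - 1 : ℕ) : ℝ) + c)⁻¹ := hstep (t - 1) (by omega) (by omega)
        _ = G / lam * (((t : ℝ) - 1) + c)⁻¹ := by rw [hcast]
    have h2 : ∑ t ∈ Finset.Icc 2 T, G / lam * (((t : ℝ) - 1) + c)⁻¹ =
        G / lam * ∑ t ∈ Finset.Icc 1 (T - 1), ((t : ℝ) + c)⁻¹ := by
      rw [Finset.mul_sum, ← Finset.Ico_add_one_right_eq_Icc, ← Finset.Ico_add_one_right_eq_Icc,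
        Finset.sum_Ico_eq_sum_range, Finset.sum_Ico_eq_sum_range]
      apply Finset.sum_congr
      · congr 1
      · intro i _
        have : ((2 + i : ℕ) : ℝ) - 1 + c = ((1 + i : ℕ) : ℝ) + c := by push_cast; ring
        rw [this]
    have h3 : ∑ t ∈ Finset.Icc 1 (T - 1), ((t : ℝ) + c)⁻¹ ≤ 2 * a := by
      calc ∑ t ∈ Finset.Icc 1 (T - 1), ((t : ℝ) + c)⁻¹
          ≤ 2 * (Real.log (((T - 1 : ℕ) : ℝ) + 1 + c) - Real.log (1 + c)) := harmSum c hc0 (T - 1)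
        _ ≤ 2 * (Real.log ((T : ℝ) + 1 + c) - Real.log (1 + c)) := by
            have hle : ((T - 1 : ℕ) : ℝ) ≤ (T : ℝ) := Nat.cast_le.mpr (by omega)
            have hlog := Real.log_le_log (by linarith : (0 : ℝ) < ((T - 1 : ℕ) : ℝ) + 1 + c)
              (by linarith : ((T - 1 : ℕ) : ℝ) + 1 + c ≤ (T : ℝ) + 1 + c)
            linarith
        _ = 2 * a := by rw [hkeylog]
    have h4 : G / lam * ∑ t ∈ Finset.Icc 1 (T - 1), ((t : ℝ) + c)⁻¹ ≤ G / lam * (2 * a) :=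
      mul_le_mul_of_nonneg_left h3 (by positivity)
    have h5 : G / lam * (2 * a) = S := by rw [hadef]; field_simp
    rw [h2] at h1
    linarith
  constructor
  · exact hswitch
  · -- regret bound
    -- extended sequence
    obtain ⟨WW, hWW⟩ : ∃ WW : ℕ → EuclideanSpace ℝ (Fin d), WW = fun t =>
        if t ≤ T then w t
        else ballProj d D (w T - (1 / (lam * ((T : ℝ) + c))) • gradient (f T) (w T)) := ⟨_, rfl⟩
    have hWeq : ∀ t, t ≤ T → WW t = w t := fun t ht => by rw [hWW]; exact if_pos ht
    have hWupd : ∀ t, 1 ≤ t → t ≤ T →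
        WW (t + 1) = ballProj d D (WW t - (1 / (lam * ((t : ℝ) + c))) • gradient (f t) (WW t)) := by
      intro t h1 h2
      rw [hWeq t h2]
      rcases eq_or_lt_of_le h2 with he | hl
      · subst he
        simp only [hWW]
        rw [if_neg (by omega)]
      · rw [hWeq (t + 1) (by omega)]
        exact hupd t (by simp only [Finset.mem_Icc]; omega)
    have hWball : ∀ t, 1 ≤ t → t ≤ T + 1 → ‖WW t‖ ≤ D / 2 := by
      intro t h1 h2
      rcases le_or_gt t T with h | h
      · rw [hWeq t h]; exact hwball t h1 h
      · have he : t = T + 1 := by omega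
        subst he
        simp only [hWW]
        rw [if_neg (by omega)]
        exact ballProj_norm_le d hD.le _
    have main : ∀ u ∈ Metric.closedBall (0 : EuclideanSpace ℝ (Fin d)) (D / 2),
        ∑ t ∈ Finset.Icc 1 T, f t (w t) - ∑ t ∈ Finset.Icc 1 T, f t u ≤
          lam * c * D ^ 2 / 2 + G * S / 2 := by
      intro u hu
      have hun : ‖u‖ ≤ D / 2 := mem_closedBall_zero_iff.mp hu
      obtain ⟨A, hA⟩ : ∃ A : ℕ → ℝ, A = fun n => ‖WW n - u‖ ^ 2 := ⟨_, rfl⟩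
      obtain ⟨b, hb⟩ : ∃ b : ℕ → ℝ, b = fun n : ℕ => ((n : ℝ) - 1 + c) * A n := ⟨_, rfl⟩
      have key : ∀ t ∈ Finset.Icc 1 T, f t (w t) - f t u ≤
          lam / 2 * (b t - b (t + 1)) + G ^ 2 / (2 * lam) * ((t : ℝ) + c)⁻¹ := by
        intro t ht
        have htm := ht
        simp only [Finset.mem_Icc] at ht
        obtain ⟨ht1, ht2⟩ := ht
        have htR : (1 : ℝ) ≤ (t : ℝ) := by exact_mod_cast ht1
        have hs0 : (0 : ℝ) < (t : ℝ) + c := by linarith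
        have hls : (0 : ℝ) < lam * ((t : ℝ) + c) := by positivity
        have hWt : WW t = w t := hWeq t ht2
        have hwmem : w t ∈ Metric.closedBall (0 : EuclideanSpace ℝ (Fin d)) (D / 2) :=
          mem_closedBall_zero_iff.mpr (hwball t ht1 ht2)
        obtain ⟨g, hg⟩ : ∃ g, g = gradient (f t) (w t) := ⟨_, rfl⟩
        obtain ⟨r, hr⟩ : ∃ r : ℝ, r = (lam * ((t : ℝ) + c))⁻¹ := ⟨_, rfl⟩
        have hr0 : (0 : ℝ) < r := by rw [hr]; exact inv_pos.mpr hls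
        have he : w t - (1 / (lam * ((t : ℝ) + c))) • g - u = (w t - u) - r • g := by
          rw [one_div, ← hr]; abel
        have h1 : ‖WW (t + 1) - u‖ ≤ ‖(w t - u) - r • g‖ := by
          rw [hWupd t ht1 ht2, hWt, ← hg]
          calc ‖ballProj d D (w t - (1 / (lam * ((t : ℝ) + c))) • g) - u‖
              ≤ ‖w t - (1 / (lam * ((t : ℝ) + c))) • g - u‖ :=
                ballProj_nonexpansive d _ u hun
            _ = ‖(w t - u) - r • g‖ := by rw [he]
        have hsq : A (t + 1) ≤ ‖(w t - u) - r • g‖ ^ 2 := by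
          simp only [hA]
          exact pow_le_pow_left₀ (norm_nonneg _) h1 2
        have h2 : ‖(w t - u) - r • g‖ ^ 2 = A t - 2 * (r * ⟪w t - u, g⟫_ℝ) + r ^ 2 * ‖g‖ ^ 2 := by
          rw [norm_sub_sq_real, real_inner_smul_right, norm_smul, Real.norm_eq_abs,
            mul_pow, sq_abs]
          simp only [hA, hWt]
        have hsc' := hsc t htm u hu (w t) hwmem
        rw [← hg] at hsc'
        have e1 : ⟪g, u - w t⟫_ℝ = -⟪w t - u, g⟫_ℝ := by
          rw [real_inner_comm, ← neg_sub (w t) u, inner_neg_left]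
        have e2 : ‖u - w t‖ ^ 2 = A t := by
          rw [norm_sub_rev]; simp only [hA, hWt]
        rw [e1, e2] at hsc'
        have h3 : (f t (w t) - f t u) + lam / 2 * A t ≤ ⟪w t - u, g⟫_ℝ := by linarith
        have hgn : ‖g‖ ≤ G := by rw [hg]; exact hgrad t htm (w t) hwmem
        have hgsq : ‖g‖ ^ 2 ≤ G ^ 2 := pow_le_pow_left₀ (norm_nonneg g) hgn 2
        have p1 := mul_le_mul_of_nonneg_left h3 (by linarith : (0 : ℝ) ≤ 2 * r)
        have p2 := mul_le_mul_of_nonneg_left hgsq (sq_nonneg r)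
        have H : A (t + 1) ≤ A t - 2 * r * ((f t (w t) - f t u) + lam / 2 * A t) + r ^ 2 * G ^ 2 := by
          linarith [hsq, h2, p1, p2]
        have hr1 : lam * ((t : ℝ) + c) * r = 1 := by rw [hr]; field_simp
        have H4 : lam * ((t : ℝ) + c) * A (t + 1) ≤
            lam * ((t : ℝ) + c) * A t - 2 * (f t (w t) - f t u) - lam * A t + r * G ^ 2 := by
          have H3 := mul_le_mul_of_nonneg_left H hls.le
          calc lam * ((t : ℝ) + c) * A (t + 1)
              ≤ lam * ((t : ℝ) + c) * (A t - 2 * r * ((f t (w t) - f t u) + lam / 2 * A t)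
                  + r ^ 2 * G ^ 2) := H3
            _ = lam * ((t : ℝ) + c) * A t - (lam * ((t : ℝ) + c) * r) * (2 * (f t (w t) - f t u))
                - (lam * ((t : ℝ) + c) * r) * (lam * A t)
                + (lam * ((t : ℝ) + c) * r) * (r * G ^ 2) := by ring
            _ = lam * ((t : ℝ) + c) * A t - 2 * (f t (w t) - f t u) - lam * A t + r * G ^ 2 := by
                rw [hr1]; ring
        have hbt : b t = ((t : ℝ) + c - 1) * A t := by simp only [hb]; ring
        have hbt1 : b (t + 1) = ((t : ℝ) + c) * A (t + 1) := by
          simp only [hb]; push_cast; ring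
        have hre : G ^ 2 / (2 * lam) * ((t : ℝ) + c)⁻¹ = r * G ^ 2 / 2 := by
          rw [hr, mul_inv]; ring
        rw [hbt, hbt1, hre]
        linarith [H4]
      have sum1 := Finset.sum_le_sum key
      rw [Finset.sum_sub_distrib] at sum1
      have tele : ∑ t ∈ Finset.Icc 1 T, (b t - b (t + 1)) = b 1 - b (T + 1) := by
        rw [← Finset.Ico_add_one_right_eq_Icc, Finset.sum_Ico_eq_sum_range]
        simp only [Nat.add_sub_cancel]
        calc ∑ k ∈ Finset.range T, (b (1 + k) - b (1 + k + 1))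
            = ∑ k ∈ Finset.range T, (b (1 + k) - b (1 + (k + 1))) := by
              apply Finset.sum_congr rfl
              intro k _
              rw [Nat.add_assoc]
          _ = b (1 + 0) - b (1 + T) := Finset.sum_range_sub' (fun i => b (1 + i)) T
          _ = b 1 - b (T + 1) := by rw [Nat.add_comm 1 T]
      have split : ∑ t ∈ Finset.Icc 1 T,
          (lam / 2 * (b t - b (t + 1)) + G ^ 2 / (2 * lam) * ((t : ℝ) + c)⁻¹) =
          lam / 2 * (b 1 - b (T + 1)) +
            G ^ 2 / (2 * lam) * ∑ t ∈ Finset.Icc 1 T, ((t : ℝ) + c)⁻¹ := by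
        rw [Finset.sum_add_distrib, ← Finset.mul_sum, ← Finset.mul_sum, tele]
      rw [split] at sum1
      have hA1 : A 1 ≤ D ^ 2 := by
        simp only [hA]
        rw [hWeq 1 (by omega)]
        have h1 : ‖w 1 - u‖ ≤ D := by
          have := norm_sub_le (w 1) u
          have hw1n : ‖w 1‖ ≤ D / 2 := mem_closedBall_zero_iff.mp hw1
          linarith
        exact pow_le_pow_left₀ (norm_nonneg _) h1 2
      have hb1 : b 1 ≤ c * D ^ 2 := by
        have he : b 1 = c * A 1 := by simp only [hb]; push_cast; ring
        rw [he]
        exact mul_le_mul_of_nonneg_left hA1 hc0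
      have hbT : 0 ≤ b (T + 1) := by
        simp only [hb, hA]
        apply mul_nonneg _ (sq_nonneg _)
        push_cast
        linarith
      have hsum2 : ∑ t ∈ Finset.Icc 1 T, ((t : ℝ) + c)⁻¹ ≤ 2 * a := by
        calc ∑ t ∈ Finset.Icc 1 T, ((t : ℝ) + c)⁻¹
            ≤ 2 * (Real.log ((T : ℝ) + 1 + c) - Real.log (1 + c)) := harmSum c hc0 T
          _ = 2 * a := by rw [hkeylog]
      have t1 : lam / 2 * (b 1 - b (T + 1)) ≤ lam / 2 * (c * D ^ 2) := by
        apply mul_le_mul_of_nonneg_left _ (by positivity)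
        linarith
      have t2 : G ^ 2 / (2 * lam) * ∑ t ∈ Finset.Icc 1 T, ((t : ℝ) + c)⁻¹ ≤
          G ^ 2 / (2 * lam) * (2 * a) := mul_le_mul_of_nonneg_left hsum2 (by positivity)
      have t3 : G ^ 2 / (2 * lam) * (2 * a) = G * S / 2 := by rw [hadef]; field_simp
      linarith
    -- from comparator bound to infimum bound
    have hRHS : lam * c * D ^ 2 / 2 + G * S / 2 ≤
        lam * (T : ℝ) * D ^ 2 / (Real.exp a - 1) + G * S := by
      have he : lam * (T : ℝ) * D ^ 2 / (Real.exp a - 1) = lam * (c + 1) * D ^ 2 := by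
        rw [hc1]; field_simp
      rw [he]
      linarith [mul_nonneg (mul_nonneg hlam.le hc0) (sq_nonneg D), mul_nonneg hlam.le (sq_nonneg D), mul_pos hG hS0]
    haveI : Nonempty (Metric.closedBall (0 : EuclideanSpace ℝ (Fin d)) (D / 2)) :=
      ⟨⟨0, Metric.mem_closedBall_self (by positivity)⟩⟩
    have hle : ∀ v : Metric.closedBall (0 : EuclideanSpace ℝ (Fin d)) (D / 2),
        (∑ t ∈ Finset.Icc 1 T, f t (w t)) -
          (lam * (T : ℝ) * D ^ 2 / (Real.exp a - 1) + G * S) ≤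
          ∑ t ∈ Finset.Icc 1 T, f t (v : EuclideanSpace ℝ (Fin d)) := by
      intro v
      have := main v v.2
      linarith
    have hinf := le_ciInf hle
    linarith
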